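/- arXiv:1608.01528 — 2 statements merged into one kernel-verified Lean document; each statement's English description precedes it below -/
import Mathlib

section
/- For every causal tripartite correlation P(a,b,c|x,y,z) with binary inputs x,y,z ∈ {0,1} and binary outputs a,b,c ∈ {0,1}, the causal inequality I_1 ≥ 0 holds, where I_1 = P_{AB}(1,1|1,1,0) + P_{BC}(1,1|0,1,1) + P_{AC}(1,1|1,0,1) − P(1,1,1|1,1,1), with P_{AB}(a,b|x,y,z) := Σ_c P(a,b,c|x,y,z), P_{BC}(b,c|x,y,z) := Σ_a P(a,b,c|x,y,z), and P_{AC}(a,c|x,y,z) := Σ_b P(a,b,c|x,y,z). -/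
/-- A correlation for the parties in the finite set `S`, where party `i` has input set `X i`
and output set `A i`: a real number `P x a` for each assignment of inputs `x` and outputs `a`
for the parties in `S`. -/
def Corr {ι : Type} (X A : ι → Type) (S : Finset ι) : Type :=
  ((i : {j // j ∈ S}) → X i.1) → ((i : {j // j ∈ S}) → A i.1) → ℝ

/-- `p` is a probability distribution on the finite type `α`. -/
def IsProbDist {α : Type} [Fintype α] (p : α → ℝ) : Prop :=
  (∀ a, 0 ≤ p a) ∧ ∑ a, p a = 1

/-- Restriction of a tuple indexed by `S` to a subset `T ⊆ S`. -/
def restr {ι : Type} {X : ι → Type} {S T : Finset ι} (h : T ⊆ S)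
    (x : (i : {j // j ∈ S}) → X i.1) : (i : {j // j ∈ T}) → X i.1 :=
  fun i => x ⟨i.1, h i.2⟩

theorem erase_sub {ι : Type} [DecidableEq ι] (S : Finset ι) (k : ι) : S.erase k ⊆ S :=
  fun _ hi => Finset.mem_of_mem_erase hi

theorem sdiff_sub {ι : Type} [DecidableEq ι] (S K : Finset ι) : S \ K ⊆ S :=
  fun _ hi => (Finset.mem_sdiff.mp hi).1

/-- Combine a tuple on `K` and a tuple on `S \ K` into a tuple on `S`. -/
def glue {ι : Type} [DecidableEq ι] {X : ι → Type} {S K : Finset ι} (_ : K ⊆ S)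
    (u : (i : {j // j ∈ K}) → X i.1) (v : (i : {j // j ∈ S \ K}) → X i.1) :
    (i : {j // j ∈ S}) → X i.1 :=
  fun i => if h : i.1 ∈ K then u ⟨i.1, h⟩ else v ⟨i.1, Finset.mem_sdiff.mpr ⟨i.2, h⟩⟩

/-- Insert a value for party `k` into a tuple on `S.erase k`, giving a tuple on `S`. -/
def ins {ι : Type} [DecidableEq ι] {X : ι → Type} {S : Finset ι} {k : ι} (_ : k ∈ S)
    (xk : X k) (u : (i : {j // j ∈ S.erase k}) → X i.1) : (i : {j // j ∈ S}) → X i.1 :=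
  fun i => if h : i.1 = k then cast (congrArg X h.symm) xk
    else u ⟨i.1, Finset.mem_erase.mpr ⟨h, i.2⟩⟩

/-- Causal correlations, defined by induction on the number of parties: any single-party
probability distribution is causal; a correlation on a set `S` of at least two parties is
causal iff it is a convex combination, over choices of a party `k ∈ S` acting first, of
products of a single-party distribution for `k` with causal correlations for the remaining
parties `S.erase k` that may depend on the input and output of party `k`. -/
inductive IsCausal {ι : Type} [DecidableEq ι] (X A : ι → Type) [∀ i, Fintype (A i)] :
    (S : Finset ι) → Corr X A S → Prop
  | base (k : ι) (P : Corr X A {k}) (hP : ∀ x, IsProbDist (P x)) : IsCausal X A {k} P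
  | step (S : Finset ι) (hS : 2 ≤ S.card) (P : Corr X A S)
      (q : {j // j ∈ S} → ℝ)
      (Pfirst : (k : {j // j ∈ S}) → X k.1 → A k.1 → ℝ)
      (Prest : (k : {j // j ∈ S}) → X k.1 → A k.1 → Corr X A (S.erase k.1))
      (hq : ∀ k, 0 ≤ q k)
      (hq1 : ∑ k ∈ S.attach, q k = 1)
      (hPfirst : ∀ k xk, IsProbDist (Pfirst k xk))
      (hPrest : ∀ k xk ak, IsCausal X A (S.erase k.1) (Prest k xk ak))
      (hP : ∀ x a, P x a = ∑ k ∈ S.attach, q k * Pfirst k (x k) (a k) *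
            Prest k (x k) (a k) (restr (erase_sub S k.1) x) (restr (erase_sub S k.1) a)) :
      IsCausal X A S P

/-- Tripartite correlations with binary inputs and binary outputs for the three parties
`A`, `B`, `C` (encoding input/output `0` as `false` and `1` as `true`). -/
abbrev Corr3 : Type := Corr (fun _ : Fin 3 => Bool) (fun _ : Fin 3 => Bool) Finset.univ

/-- The triple `(u, v, w)` as an input (or output) assignment for the three parties. -/
def t3 (u v w : Bool) : (i : {j // j ∈ (Finset.univ : Finset (Fin 3))}) → Bool :=
  fun i => ![u, v, w] i.1


/-- Assignment giving `u` to party `i` and `v` to all other parties of `S`. -/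
def pr {ι : Type} [DecidableEq ι] {S : Finset ι} (i : ι) (u v : Bool) :
    (l : {m // m ∈ S}) → Bool :=
  fun l => if l.1 = i then u else v

lemma isCausal_nonneg {ι : Type} [DecidableEq ι] {X A : ι → Type} [∀ i, Fintype (A i)]
    {S : Finset ι} {P : Corr X A S} (h : IsCausal X A S P) : ∀ x a, 0 ≤ P x a := by
  induction h with
  | base k P hP => exact fun x a => (hP x).1 a
  | step S hS P q Pfirst Prest hq hq1 hPfirst hPrest hP ih =>
    intro x a
    rw [hP]
    refine Finset.sum_nonneg fun k _ => ?_
    exact mul_nonneg (mul_nonneg (hq k) ((hPfirst k _).1 _)) (ih k _ _ _ _)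

lemma isCausal_card_one {ι : Type} [DecidableEq ι] {X A : ι → Type} [∀ i, Fintype (A i)]
    {T : Finset ι} {R : Corr X A T} (h : IsCausal X A T R) :
    T.card = 1 → ∀ x, IsProbDist (R x) := by
  cases h with
  | base k P hP => exact fun _ => hP
  | step S hS P q Pfirst Prest hq hq1 hPfirst hPrest hP => intro hT; omega

lemma sum_bool_fun {ι : Type} [DecidableEq ι] {T : Finset ι} {j : ι} (hj : j ∈ T)
    (hall : ∀ l : {m // m ∈ T}, l.1 = j) (g : ({m // m ∈ T} → Bool) → ℝ) :
    ∑ a, g a = g (fun _ => false) + g (fun _ => true) := by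
  have key := Equiv.sum_comp
    (⟨fun (b : Bool) (_ : {m // m ∈ T}) => b, fun f => f ⟨j, hj⟩, fun b => rfl,
      by intro f; funext l; rw [show l = ⟨j, hj⟩ from Subtype.ext (hall l)]⟩ :
      Bool ≃ ({m // m ∈ T} → Bool)) g
  rw [Fintype.sum_bool] at key
  rw [← key]
  exact add_comm _ _

lemma sum_attach_pair {ι : Type} [DecidableEq ι] {S : Finset ι} {i j : ι} (hne : i ≠ j)
    (hi : i ∈ S) (hj : j ∈ S) (hS : S = {i, j}) (f : {m // m ∈ S} → ℝ) :
    ∑ k ∈ S.attach, f k = f ⟨i, hi⟩ + f ⟨j, hj⟩ := by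
  subst hS
  calc ∑ k ∈ ({i, j} : Finset ι).attach, f k
      = ∑ k ∈ ({i, j} : Finset ι).attach,
          (fun m => if h : m ∈ ({i, j} : Finset ι) then f ⟨m, h⟩ else 0) k.1 :=
        Finset.sum_congr rfl fun k _ => by
          show f k = if h : k.1 ∈ ({i, j} : Finset ι) then f ⟨k.1, h⟩ else 0
          rw [dif_pos k.2]
    _ = ∑ m ∈ ({i, j} : Finset ι),
          (fun m => if h : m ∈ ({i, j} : Finset ι) then f ⟨m, h⟩ else 0) m :=
        Finset.sum_attach ({i, j} : Finset ι)
          (fun m => if h : m ∈ ({i, j} : Finset ι) then f ⟨m, h⟩ else 0)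
    _ = f ⟨i, hi⟩ + f ⟨j, hj⟩ := by
        rw [Finset.sum_pair hne]
        show (if h : i ∈ ({i, j} : Finset ι) then f ⟨i, h⟩ else 0)
          + (if h : j ∈ ({i, j} : Finset ι) then f ⟨j, h⟩ else 0) = _
        rw [dif_pos hi, dif_pos hj]

lemma sum_attach_univ3 (f : {m // m ∈ (Finset.univ : Finset (Fin 3))} → ℝ) :
    ∑ k ∈ Finset.univ.attach, f k =
      f ⟨0, Finset.mem_univ 0⟩ + f ⟨1, Finset.mem_univ 1⟩ + f ⟨2, Finset.mem_univ 2⟩ := by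
  calc ∑ k ∈ (Finset.univ : Finset (Fin 3)).attach, f k
      = ∑ k ∈ (Finset.univ : Finset (Fin 3)).attach,
          (fun m => f ⟨m, Finset.mem_univ m⟩) k.1 := rfl
    _ = ∑ m ∈ (Finset.univ : Finset (Fin 3)), (fun m => f ⟨m, Finset.mem_univ m⟩) m :=
        Finset.sum_attach (Finset.univ : Finset (Fin 3)) (fun m => f ⟨m, Finset.mem_univ m⟩)
    _ = f ⟨0, Finset.mem_univ 0⟩ + f ⟨1, Finset.mem_univ 1⟩ + f ⟨2, Finset.mem_univ 2⟩ :=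
        Fin.sum_univ_three _

lemma bip {S : Finset (Fin 3)} (i j : Fin 3) (hne : i ≠ j)
    (hi : i ∈ S) (hj : j ∈ S) (hcard : S.card = 2)
    (Q : Corr (fun _ : Fin 3 => Bool) (fun _ : Fin 3 => Bool) S)
    (hQ : IsCausal (fun _ : Fin 3 => Bool) (fun _ : Fin 3 => Bool) S Q) :
    0 ≤ (∑ c : Bool, Q (pr i true false) (pr i true c))
      + (∑ b : Bool, Q (pr i false true) (pr i b true))
      - Q (pr i true true) (pr i true true) := by
  cases hQ with
  | base k Pd hPd =>
    simp at hcard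
  | step S hS2 Pb q Pf Pr hq hq1 hPf hPr hform =>
    -- context probe
    have hSij : S = {i, j} := by
      refine (Finset.eq_of_subset_of_card_le ?_ ?_).symm
      · intro m hm
        simp only [Finset.mem_insert, Finset.mem_singleton] at hm
        rcases hm with rfl | rfl
        · exact hi
        · exact hj
      · rw [hcard, Finset.card_pair hne]
    have hpi : ∀ u v : Bool, pr (S := S) i u v ⟨i, hi⟩ = u := fun u v => if_pos rfl
    have hpj : ∀ u v : Bool, pr (S := S) i u v ⟨j, hj⟩ = v :=
      fun u v => if_neg (fun h => hne h.symm)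
    have hri : ∀ u v : Bool, restr (X := fun _ : Fin 3 => Bool) (erase_sub S i) (pr (S := S) i u v)
        = fun _ => v := by
      intro u v; funext l
      have hl : l.1 ≠ i := (Finset.mem_erase.mp l.2).1
      simp [restr, pr, hl]
    have hrj : ∀ u v : Bool, restr (X := fun _ : Fin 3 => Bool) (erase_sub S j) (pr (S := S) i u v)
        = fun _ => u := by
      intro u v; funext l
      have h2 : l.1 ≠ j ∧ l.1 ∈ S := Finset.mem_erase.mp l.2
      have hl : l.1 = i := by
        have h3 : l.1 ∈ ({i, j} : Finset (Fin 3)) := by rw [← hSij]; exact h2.2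
        rcases Finset.mem_insert.mp h3 with h | h
        · exact h
        · exact absurd (Finset.mem_singleton.mp h) h2.1
      simp [restr, pr, hl]
    simp only [hform, sum_attach_pair hne hi hj hSij, hpi, hpj, hri, hrj,
      Fintype.sum_bool]
    have hcardi : (S.erase i).card = 1 := by
      rw [Finset.card_erase_of_mem hi, hcard]
    have hcardj : (S.erase j).card = 1 := by
      rw [Finset.card_erase_of_mem hj, hcard]
    have hmemji : j ∈ S.erase i := Finset.mem_erase.mpr ⟨fun h => hne h.symm, hj⟩
    have hmemij : i ∈ S.erase j := Finset.mem_erase.mpr ⟨hne, hi⟩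
    have halli : ∀ l : {m // m ∈ S.erase i}, l.1 = j := by
      intro l
      have h2 : l.1 ≠ i ∧ l.1 ∈ S := Finset.mem_erase.mp l.2
      have h3 : l.1 ∈ ({i, j} : Finset (Fin 3)) := by rw [← hSij]; exact h2.2
      rcases Finset.mem_insert.mp h3 with h | h
      · exact absurd h h2.1
      · exact Finset.mem_singleton.mp h
    have hallj : ∀ l : {m // m ∈ S.erase j}, l.1 = i := by
      intro l
      have h2 : l.1 ≠ j ∧ l.1 ∈ S := Finset.mem_erase.mp l.2
      have h3 : l.1 ∈ ({i, j} : Finset (Fin 3)) := by rw [← hSij]; exact h2.2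
      rcases Finset.mem_insert.mp h3 with h | h
      · exact h
      · exact absurd (Finset.mem_singleton.mp h) h2.1
    have probi : ∀ xk ak x, IsProbDist (Pr ⟨i, hi⟩ xk ak x) :=
      fun xk ak x => isCausal_card_one (hPr ⟨i, hi⟩ xk ak) hcardi x
    have probj : ∀ xk ak x, IsProbDist (Pr ⟨j, hj⟩ xk ak x) :=
      fun xk ak x => isCausal_card_one (hPr ⟨j, hj⟩ xk ak) hcardj x
    have normi : ∀ xk ak x, Pr ⟨i, hi⟩ xk ak x (fun _ => false)
        + Pr ⟨i, hi⟩ xk ak x (fun _ => true) = 1 := by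
      intro xk ak x
      have h := (probi xk ak x).2
      rw [sum_bool_fun hmemji halli] at h
      exact h
    have normj : ∀ xk ak x, Pr ⟨j, hj⟩ xk ak x (fun _ => false)
        + Pr ⟨j, hj⟩ xk ak x (fun _ => true) = 1 := by
      intro xk ak x
      have h := (probj xk ak x).2
      rw [sum_bool_fun hmemij hallj] at h
      exact h
    have hA : 0 ≤ q ⟨i, hi⟩ * Pf ⟨i, hi⟩ true true *
        (Pr ⟨i, hi⟩ true true (fun _ => false) (fun _ => false)
          + Pr ⟨i, hi⟩ true true (fun _ => false) (fun _ => true)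
          - Pr ⟨i, hi⟩ true true (fun _ => true) (fun _ => true)) := by
      refine mul_nonneg (mul_nonneg (hq _) ((hPf _ _).1 _)) ?_
      have h1 := normi true true (fun _ => false)
      have h2 := normi true true (fun _ => true)
      have h3 := (probi true true (fun _ => true)).1 (fun _ => false)
      linarith
    have hB : 0 ≤ q ⟨j, hj⟩ * Pf ⟨j, hj⟩ true true *
        (Pr ⟨j, hj⟩ true true (fun _ => false) (fun _ => false)
          + Pr ⟨j, hj⟩ true true (fun _ => false) (fun _ => true)
          - Pr ⟨j, hj⟩ true true (fun _ => true) (fun _ => true)) := by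
      refine mul_nonneg (mul_nonneg (hq _) ((hPf _ _).1 _)) ?_
      have h1 := normj true true (fun _ => false)
      have h2 := normj true true (fun _ => true)
      have h3 := (probj true true (fun _ => true)).1 (fun _ => false)
      linarith
    have l1 : 0 ≤ q ⟨j, hj⟩ * Pf ⟨j, hj⟩ false false *
        Pr ⟨j, hj⟩ false false (fun _ => true) (fun _ => true) :=
      mul_nonneg (mul_nonneg (hq _) ((hPf _ _).1 _)) ((probj _ _ _).1 _)
    have l2 : 0 ≤ q ⟨j, hj⟩ * Pf ⟨j, hj⟩ false true *
        Pr ⟨j, hj⟩ false true (fun _ => true) (fun _ => true) :=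
      mul_nonneg (mul_nonneg (hq _) ((hPf _ _).1 _)) ((probj _ _ _).1 _)
    have l3 : 0 ≤ q ⟨i, hi⟩ * Pf ⟨i, hi⟩ false false *
        Pr ⟨i, hi⟩ false false (fun _ => true) (fun _ => true) :=
      mul_nonneg (mul_nonneg (hq _) ((hPf _ _).1 _)) ((probi _ _ _).1 _)
    have l4 : 0 ≤ q ⟨i, hi⟩ * Pf ⟨i, hi⟩ false true *
        Pr ⟨i, hi⟩ false true (fun _ => true) (fun _ => true) :=
      mul_nonneg (mul_nonneg (hq _) ((hPf _ _).1 _)) ((probi _ _ _).1 _)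
    nlinarith [hA, hB, l1, l2, l3, l4]

lemma t3_app0 (u v w : Bool) (h : (0 : Fin 3) ∈ (Finset.univ : Finset (Fin 3))) :
    t3 u v w ⟨0, h⟩ = u := rfl

lemma t3_app1 (u v w : Bool) (h : (1 : Fin 3) ∈ (Finset.univ : Finset (Fin 3))) :
    t3 u v w ⟨1, h⟩ = v := rfl

lemma t3_app2 (u v w : Bool) (h : (2 : Fin 3) ∈ (Finset.univ : Finset (Fin 3))) :
    t3 u v w ⟨2, h⟩ = w := rfl

lemma restr0 (u v w : Bool) :
    restr (X := fun _ : Fin 3 => Bool) (erase_sub Finset.univ (0 : Fin 3)) (t3 u v w)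
      = pr 1 v w := by
  funext l
  have hl : l.1 ≠ 0 := (Finset.mem_erase.mp l.2).1
  have : l.1 = 1 ∨ l.1 = 2 := by omega
  rcases this with h | h <;> simp [restr, t3, pr, h]

lemma restr1 (u v w : Bool) :
    restr (X := fun _ : Fin 3 => Bool) (erase_sub Finset.univ (1 : Fin 3)) (t3 u v w)
      = pr 0 u w := by
  funext l
  have hl : l.1 ≠ 1 := (Finset.mem_erase.mp l.2).1
  have : l.1 = 0 ∨ l.1 = 2 := by omega
  rcases this with h | h <;> simp [restr, t3, pr, h]

lemma restr2 (u v w : Bool) :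
    restr (X := fun _ : Fin 3 => Bool) (erase_sub Finset.univ (2 : Fin 3)) (t3 u v w)
      = pr 0 u v := by
  funext l
  have hl : l.1 ≠ 2 := (Finset.mem_erase.mp l.2).1
  have : l.1 = 0 ∨ l.1 = 1 := by omega
  rcases this with h | h <;> simp [restr, t3, pr, h]

lemma isCausal_step_inv {ι : Type} [DecidableEq ι] {X A : ι → Type} [∀ i, Fintype (A i)]
    {S : Finset ι} {P : Corr X A S} (h : IsCausal X A S P) :
    2 ≤ S.card →
    ∃ (q : {j // j ∈ S} → ℝ) (Pfirst : (k : {j // j ∈ S}) → X k.1 → A k.1 → ℝ)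
      (Prest : (k : {j // j ∈ S}) → X k.1 → A k.1 → Corr X A (S.erase k.1)),
      (∀ k, 0 ≤ q k) ∧ (∀ k xk, IsProbDist (Pfirst k xk)) ∧
      (∀ k xk ak, IsCausal X A (S.erase k.1) (Prest k xk ak)) ∧
      (∀ x a, P x a = ∑ k ∈ S.attach, q k * Pfirst k (x k) (a k) *
          Prest k (x k) (a k) (restr (erase_sub S k.1) x) (restr (erase_sub S k.1) a)) := by
  cases h with
  | base k Pd hPd => intro hS; simp at hS
  | step _S hS' _P q Pf Pr hq hq1 hPf hPr hform =>
    exact fun _ => ⟨q, Pf, Pr, hq, hPf, hPr, hform⟩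

/-- every causal tripartite correlation with binary inputs and outputs
satisfies the causal inequality `I_1 ≥ 0`, i.e.,
`P_{AB}(11|110) + P_{BC}(11|011) + P_{AC}(11|101) - P(111|111) ≥ 0`. -/
theorem causal_inequality_I1 (P : Corr3)
    (hP : IsCausal (fun _ : Fin 3 => Bool) (fun _ : Fin 3 => Bool) Finset.univ P) :
    0 ≤ (∑ c : Bool, P (t3 true true false) (t3 true true c))
      + (∑ a : Bool, P (t3 false true true) (t3 a true true))
      + (∑ b : Bool, P (t3 true false true) (t3 true b true))
      - P (t3 true true true) (t3 true true true) := by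
  obtain ⟨q, Pf, Pr, hq, hPf, hPr, hform⟩ := isCausal_step_inv hP (by decide)
  simp only [hform, sum_attach_univ3, t3_app0, t3_app1, t3_app2,
    restr0, restr1, restr2, Fintype.sum_bool]
  have hB0 := bip 1 2 (by decide) (by decide) (by decide) (by decide)
    (Pr ⟨0, Finset.mem_univ 0⟩ true true) (hPr ⟨0, Finset.mem_univ 0⟩ true true)
  have hB1 := bip 0 2 (by decide) (by decide) (by decide) (by decide)
    (Pr ⟨1, Finset.mem_univ 1⟩ true true) (hPr ⟨1, Finset.mem_univ 1⟩ true true)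
  have hB2 := bip 0 1 (by decide) (by decide) (by decide) (by decide)
    (Pr ⟨2, Finset.mem_univ 2⟩ true true) (hPr ⟨2, Finset.mem_univ 2⟩ true true)
  simp only [Fintype.sum_bool] at hB0 hB1 hB2
  have hC0 := mul_nonneg (mul_nonneg (hq ⟨0, Finset.mem_univ 0⟩)
    ((hPf ⟨0, Finset.mem_univ 0⟩ true).1 true)) hB0
  have hC1 := mul_nonneg (mul_nonneg (hq ⟨1, Finset.mem_univ 1⟩)
    ((hPf ⟨1, Finset.mem_univ 1⟩ true).1 true)) hB1
  have hC2 := mul_nonneg (mul_nonneg (hq ⟨2, Finset.mem_univ 2⟩)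
    ((hPf ⟨2, Finset.mem_univ 2⟩ true).1 true)) hB2
  have n1 := mul_nonneg (mul_nonneg (hq ⟨2, Finset.mem_univ 2⟩)
    ((hPf ⟨2, Finset.mem_univ 2⟩ false).1 true))
    (isCausal_nonneg (hPr ⟨2, Finset.mem_univ 2⟩ false true) (pr 0 true true) (pr 0 true true))
  have n2 := mul_nonneg (mul_nonneg (hq ⟨2, Finset.mem_univ 2⟩)
    ((hPf ⟨2, Finset.mem_univ 2⟩ false).1 false))
    (isCausal_nonneg (hPr ⟨2, Finset.mem_univ 2⟩ false false) (pr 0 true true) (pr 0 true true))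
  have n3 := mul_nonneg (mul_nonneg (hq ⟨0, Finset.mem_univ 0⟩)
    ((hPf ⟨0, Finset.mem_univ 0⟩ false).1 true))
    (isCausal_nonneg (hPr ⟨0, Finset.mem_univ 0⟩ false true) (pr 1 true true) (pr 1 true true))
  have n4 := mul_nonneg (mul_nonneg (hq ⟨0, Finset.mem_univ 0⟩)
    ((hPf ⟨0, Finset.mem_univ 0⟩ false).1 false))
    (isCausal_nonneg (hPr ⟨0, Finset.mem_univ 0⟩ false false) (pr 1 true true) (pr 1 true true))
  have n5 := mul_nonneg (mul_nonneg (hq ⟨1, Finset.mem_univ 1⟩)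
    ((hPf ⟨1, Finset.mem_univ 1⟩ false).1 true))
    (isCausal_nonneg (hPr ⟨1, Finset.mem_univ 1⟩ false true) (pr 0 true true) (pr 0 true true))
  have n6 := mul_nonneg (mul_nonneg (hq ⟨1, Finset.mem_univ 1⟩)
    ((hPf ⟨1, Finset.mem_univ 1⟩ false).1 false))
    (isCausal_nonneg (hPr ⟨1, Finset.mem_univ 1⟩ false false) (pr 0 true true) (pr 0 true true))
  nlinarith [hC0, hC1, hC2, n1, n2, n3, n4, n5, n6]
end

section
/- For every causal tripartite correlation P(a,b,c|x,y,z) with binary inputs x,y,z ∈ {0,1} and binary outputs a,b,c ∈ {0,1}, the causal inequality I_3 ≥ 0 holds, where I_3 = 2 − P_{AB}(0,1|1,1,0) − P_{BC}(0,1|0,1,1) − P_{AC}(1,0|1,0,1), with P_{AB}(a,b|x,y,z) := Σ_c P(a,b,c|x,y,z), P_{BC}(b,c|x,y,z) := Σ_a P(a,b,c|x,y,z), and P_{AC}(a,c|x,y,z) := Σ_b P(a,b,c|x,y,z). -/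
section Aux
variable {ι : Type} [DecidableEq ι] {X A : ι → Type} [∀ i, Fintype (A i)]

def eraseEquiv {S : Finset ι} {k : ι} (hk : k ∈ S) :
    ((i : {j // j ∈ S}) → A i.1) ≃ A k × ((i : {j // j ∈ S.erase k}) → A i.1) where
  toFun a := (a ⟨k, hk⟩, restr (erase_sub S k) a)
  invFun p := ins hk p.1 p.2
  left_inv a := by
    funext i
    obtain ⟨i, hi⟩ := i
    by_cases h : i = k
    · subst h; simp [ins]
    · simp [ins, h, restr]
  right_inv p := by
    obtain ⟨xk, u⟩ := p
    refine Prod.ext ?_ ?_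
    · simp [ins, restr]
    · funext i
      obtain ⟨i, hi⟩ := i
      have h : i ≠ k := (Finset.mem_erase.mp hi).1
      simp [restr, ins, h]

lemma isProbDist_causal {S : Finset ι} {P : Corr X A S}
    (h : IsCausal X A S P) : ∀ x, IsProbDist (P x) := by
  induction h with
  | base k P hP => exact hP
  | step S hS P q Pfirst Prest hq hq1 hPfirst hPrest hP IH =>
    intro x
    constructor
    · intro a
      rw [hP]
      refine Finset.sum_nonneg fun k _ => ?_
      exact mul_nonneg (mul_nonneg (hq k) ((hPfirst k (x k)).1 (a k)))
        ((IH k (x k) (a k) _).1 _)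
    · have key : ∀ k : {j // j ∈ S},
          ∑ a : (i : {j // j ∈ S}) → A i.1,
            q k * Pfirst k (x k) (a k) *
              Prest k (x k) (a k) (restr (erase_sub S k.1) x) (restr (erase_sub S k.1) a)
          = q k := by
        intro k
        rw [Fintype.sum_equiv (eraseEquiv k.2)
          (fun a => q k * Pfirst k (x k) (a k) *
            Prest k (x k) (a k) (restr (erase_sub S k.1) x) (restr (erase_sub S k.1) a))
          (fun p => q k * Pfirst k (x k) p.1 *
            Prest k (x k) p.1 (restr (erase_sub S k.1) x) p.2)
          (fun a => rfl)]
        rw [Fintype.sum_prod_type]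
        have : ∀ ak : A k.1,
            ∑ u : (i : {j // j ∈ S.erase k.1}) → A i.1,
              q k * Pfirst k (x k) ak *
                Prest k (x k) ak (restr (erase_sub S k.1) x) u
            = q k * Pfirst k (x k) ak := by
          intro ak
          rw [← Finset.mul_sum, (IH k (x k) ak (restr (erase_sub S k.1) x)).2, mul_one]
        rw [Finset.sum_congr rfl (fun ak _ => this ak), ← Finset.mul_sum,
          (hPfirst k (x k)).2, mul_one]
      calc ∑ a, P x a
          = ∑ k ∈ S.attach, ∑ a : (i : {j // j ∈ S}) → A i.1,
            q k * Pfirst k (x k) (a k) *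
              Prest k (x k) (a k) (restr (erase_sub S k.1) x) (restr (erase_sub S k.1) a) := by
            rw [Finset.sum_congr rfl (fun a _ => hP x a), Finset.sum_comm]
        _ = ∑ k ∈ S.attach, q k := Finset.sum_congr rfl (fun k _ => key k)
        _ = 1 := hq1

lemma prob_le_one {α : Type} [Fintype α] {p : α → ℝ} (h : IsProbDist p) (a : α) : p a ≤ 1 := by
  rw [← h.2]
  exact Finset.single_le_sum (fun i _ => h.1 i) (Finset.mem_univ a)

lemma prob_pair_le_one {α : Type} [Fintype α] [DecidableEq α] {p : α → ℝ} (h : IsProbDist p)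
    {a b : α} (hab : a ≠ b) : p a + p b ≤ 1 := by
  have := Finset.sum_le_sum_of_subset_of_nonneg (Finset.subset_univ {a, b})
    (fun i _ _ => h.1 i)
  rwa [Finset.sum_pair hab, h.2] at this

end Aux

lemma IsCausal.exists_step {ι : Type} [DecidableEq ι] {X A : ι → Type} [∀ i, Fintype (A i)]
    {S : Finset ι} {P : Corr X A S} (h : IsCausal X A S P) (hcard : 2 ≤ S.card) :
    ∃ (q : {j // j ∈ S} → ℝ) (Pfirst : (k : {j // j ∈ S}) → X k.1 → A k.1 → ℝ)
      (Prest : (k : {j // j ∈ S}) → X k.1 → A k.1 → Corr X A (S.erase k.1)),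
      (∀ k, 0 ≤ q k) ∧ (∑ k ∈ S.attach, q k = 1) ∧ (∀ k xk, IsProbDist (Pfirst k xk)) ∧
      (∀ k xk ak, IsCausal X A (S.erase k.1) (Prest k xk ak)) ∧
      (∀ x a, P x a = ∑ k ∈ S.attach, q k * Pfirst k (x k) (a k) *
        Prest k (x k) (a k) (restr (erase_sub S k.1) x) (restr (erase_sub S k.1) a)) := by
  cases h with
  | base k P0 hprob => simp at hcard
  | step S hS P0 q Pfirst Prest hq hq1 hPfirst hPrest hF =>
    exact ⟨q, Pfirst, Prest, hq, hq1, hPfirst, hPrest, hF⟩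

lemma branch_pair {a r1 r2 : ℝ} (ha : 0 ≤ a) (h : r1 + r2 ≤ 1) : a * r1 + a * r2 ≤ a := by
  nlinarith

def K (j : Fin 3) : {i // i ∈ (Finset.univ : Finset (Fin 3))} := ⟨j, Finset.mem_univ j⟩

lemma t3K0 (u v w : Bool) : t3 u v w (K 0) = u := rfl
lemma t3K1 (u v w : Bool) : t3 u v w (K 1) = v := rfl
lemma t3K2 (u v w : Bool) : t3 u v w (K 2) = w := rfl

/-- every causal tripartite correlation with binary inputs and outputs
satisfies the causal inequality `I_3 ≥ 0`, i.e.,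
`2 - P_{AB}(01|110) - P_{BC}(01|011) - P_{AC}(10|101) ≥ 0`. -/
theorem causal_inequality_I3 (P : Corr3)
    (hP : IsCausal (fun _ : Fin 3 => Bool) (fun _ : Fin 3 => Bool) Finset.univ P) :
    0 ≤ 2 - (∑ c : Bool, P (t3 true true false) (t3 false true c))
      - (∑ a : Bool, P (t3 false true true) (t3 a false true))
      - (∑ b : Bool, P (t3 true false true) (t3 true b false)) := by
  obtain ⟨q, Pf, Pr, hq, hq1, hPf, hPr, hF⟩ := hP.exists_step (by decide)
  have hsum : ∀ f : {j // j ∈ (Finset.univ : Finset (Fin 3))} → ℝ,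
      ∑ k ∈ Finset.univ.attach, f k = f (K 0) + f (K 1) + f (K 2) := by
    intro f
    have h1 : ∑ k ∈ Finset.univ.attach, f k = ∑ j ∈ (Finset.univ : Finset (Fin 3)), f (K j) :=
      Finset.sum_attach Finset.univ (fun j => f (K j))
    rw [h1, Fin.sum_univ_three]
  rw [hsum] at hq1
  -- probability facts for the rest-correlations
  have hprob : ∀ (k : {j // j ∈ (Finset.univ : Finset (Fin 3))}) (xk ak : Bool) x',
      IsProbDist (Pr k xk ak x') := fun k xk ak x' => isProbDist_causal (hPr k xk ak) x'
  -- q * Pf sums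
  have hqf : ∀ k x, q k * Pf k x true + q k * Pf k x false = q k := by
    intro k x
    have h := (hPf k x).2
    rw [Fintype.sum_bool] at h
    rw [← mul_add, h, mul_one]
  have hqfn : ∀ k x a, 0 ≤ q k * Pf k x a := fun k x a => mul_nonneg (hq k) ((hPf k x).1 a)
  simp only [Fintype.sum_bool, hF, hsum, t3K0, t3K1, t3K2]
  -- T1 bounds
  have hA1 : q (K 0) * Pf (K 0) true false *
        Pr (K 0) true false (restr (X := fun _ : Fin 3 => Bool) (erase_sub Finset.univ (K 0).1) (t3 true true false))
          (restr (X := fun _ : Fin 3 => Bool) (erase_sub Finset.univ (K 0).1) (t3 false true true))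
      + q (K 0) * Pf (K 0) true false *
        Pr (K 0) true false (restr (X := fun _ : Fin 3 => Bool) (erase_sub Finset.univ (K 0).1) (t3 true true false))
          (restr (X := fun _ : Fin 3 => Bool) (erase_sub Finset.univ (K 0).1) (t3 false true false))
      ≤ q (K 0) * Pf (K 0) true false := by
    refine branch_pair (hqfn _ _ _) (prob_pair_le_one (hprob _ _ _ _) ?_)
    decide
  have hB1 : q (K 1) * Pf (K 1) true true *
        Pr (K 1) true true (restr (X := fun _ : Fin 3 => Bool) (erase_sub Finset.univ (K 1).1) (t3 true true false))
          (restr (X := fun _ : Fin 3 => Bool) (erase_sub Finset.univ (K 1).1) (t3 false true true))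
      + q (K 1) * Pf (K 1) true true *
        Pr (K 1) true true (restr (X := fun _ : Fin 3 => Bool) (erase_sub Finset.univ (K 1).1) (t3 true true false))
          (restr (X := fun _ : Fin 3 => Bool) (erase_sub Finset.univ (K 1).1) (t3 false true false))
      ≤ q (K 1) * Pf (K 1) true true := by
    refine branch_pair (hqfn _ _ _) (prob_pair_le_one (hprob _ _ _ _) ?_)
    decide
  have hC1t : q (K 2) * Pf (K 2) false true *
        Pr (K 2) false true (restr (X := fun _ : Fin 3 => Bool) (erase_sub Finset.univ (K 2).1) (t3 true true false))
          (restr (X := fun _ : Fin 3 => Bool) (erase_sub Finset.univ (K 2).1) (t3 false true true))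
      ≤ q (K 2) * Pf (K 2) false true :=
    mul_le_of_le_one_right (hqfn _ _ _) (prob_le_one (hprob _ _ _ _) _)
  have hC1f : q (K 2) * Pf (K 2) false false *
        Pr (K 2) false false (restr (X := fun _ : Fin 3 => Bool) (erase_sub Finset.univ (K 2).1) (t3 true true false))
          (restr (X := fun _ : Fin 3 => Bool) (erase_sub Finset.univ (K 2).1) (t3 false true false))
      ≤ q (K 2) * Pf (K 2) false false :=
    mul_le_of_le_one_right (hqfn _ _ _) (prob_le_one (hprob _ _ _ _) _)
  -- T2 bounds
  have hA2t : q (K 0) * Pf (K 0) false true *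
        Pr (K 0) false true (restr (X := fun _ : Fin 3 => Bool) (erase_sub Finset.univ (K 0).1) (t3 false true true))
          (restr (X := fun _ : Fin 3 => Bool) (erase_sub Finset.univ (K 0).1) (t3 true false true))
      ≤ q (K 0) * Pf (K 0) false true :=
    mul_le_of_le_one_right (hqfn _ _ _) (prob_le_one (hprob _ _ _ _) _)
  have hA2f : q (K 0) * Pf (K 0) false false *
        Pr (K 0) false false (restr (X := fun _ : Fin 3 => Bool) (erase_sub Finset.univ (K 0).1) (t3 false true true))
          (restr (X := fun _ : Fin 3 => Bool) (erase_sub Finset.univ (K 0).1) (t3 false false true))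
      ≤ q (K 0) * Pf (K 0) false false :=
    mul_le_of_le_one_right (hqfn _ _ _) (prob_le_one (hprob _ _ _ _) _)
  have hB2 : q (K 1) * Pf (K 1) true false *
        Pr (K 1) true false (restr (X := fun _ : Fin 3 => Bool) (erase_sub Finset.univ (K 1).1) (t3 false true true))
          (restr (X := fun _ : Fin 3 => Bool) (erase_sub Finset.univ (K 1).1) (t3 true false true))
      + q (K 1) * Pf (K 1) true false *
        Pr (K 1) true false (restr (X := fun _ : Fin 3 => Bool) (erase_sub Finset.univ (K 1).1) (t3 false true true))
          (restr (X := fun _ : Fin 3 => Bool) (erase_sub Finset.univ (K 1).1) (t3 false false true))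
      ≤ q (K 1) * Pf (K 1) true false := by
    refine branch_pair (hqfn _ _ _) (prob_pair_le_one (hprob _ _ _ _) ?_)
    decide
  have hC2 : q (K 2) * Pf (K 2) true true *
        Pr (K 2) true true (restr (X := fun _ : Fin 3 => Bool) (erase_sub Finset.univ (K 2).1) (t3 false true true))
          (restr (X := fun _ : Fin 3 => Bool) (erase_sub Finset.univ (K 2).1) (t3 true false true))
      + q (K 2) * Pf (K 2) true true *
        Pr (K 2) true true (restr (X := fun _ : Fin 3 => Bool) (erase_sub Finset.univ (K 2).1) (t3 false true true))
          (restr (X := fun _ : Fin 3 => Bool) (erase_sub Finset.univ (K 2).1) (t3 false false true))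
      ≤ q (K 2) * Pf (K 2) true true := by
    refine branch_pair (hqfn _ _ _) (prob_pair_le_one (hprob _ _ _ _) ?_)
    decide
  -- T3 bounds
  have hA3 : q (K 0) * Pf (K 0) true true *
        Pr (K 0) true true (restr (X := fun _ : Fin 3 => Bool) (erase_sub Finset.univ (K 0).1) (t3 true false true))
          (restr (X := fun _ : Fin 3 => Bool) (erase_sub Finset.univ (K 0).1) (t3 true true false))
      + q (K 0) * Pf (K 0) true true *
        Pr (K 0) true true (restr (X := fun _ : Fin 3 => Bool) (erase_sub Finset.univ (K 0).1) (t3 true false true))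
          (restr (X := fun _ : Fin 3 => Bool) (erase_sub Finset.univ (K 0).1) (t3 true false false))
      ≤ q (K 0) * Pf (K 0) true true := by
    refine branch_pair (hqfn _ _ _) (prob_pair_le_one (hprob _ _ _ _) ?_)
    decide
  have hB3t : q (K 1) * Pf (K 1) false true *
        Pr (K 1) false true (restr (X := fun _ : Fin 3 => Bool) (erase_sub Finset.univ (K 1).1) (t3 true false true))
          (restr (X := fun _ : Fin 3 => Bool) (erase_sub Finset.univ (K 1).1) (t3 true true false))
      ≤ q (K 1) * Pf (K 1) false true :=
    mul_le_of_le_one_right (hqfn _ _ _) (prob_le_one (hprob _ _ _ _) _)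
  have hB3f : q (K 1) * Pf (K 1) false false *
        Pr (K 1) false false (restr (X := fun _ : Fin 3 => Bool) (erase_sub Finset.univ (K 1).1) (t3 true false true))
          (restr (X := fun _ : Fin 3 => Bool) (erase_sub Finset.univ (K 1).1) (t3 true false false))
      ≤ q (K 1) * Pf (K 1) false false :=
    mul_le_of_le_one_right (hqfn _ _ _) (prob_le_one (hprob _ _ _ _) _)
  have hC3 : q (K 2) * Pf (K 2) true false *
        Pr (K 2) true false (restr (X := fun _ : Fin 3 => Bool) (erase_sub Finset.univ (K 2).1) (t3 true false true))
          (restr (X := fun _ : Fin 3 => Bool) (erase_sub Finset.univ (K 2).1) (t3 true true false))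
      + q (K 2) * Pf (K 2) true false *
        Pr (K 2) true false (restr (X := fun _ : Fin 3 => Bool) (erase_sub Finset.univ (K 2).1) (t3 true false true))
          (restr (X := fun _ : Fin 3 => Bool) (erase_sub Finset.univ (K 2).1) (t3 true false false))
      ≤ q (K 2) * Pf (K 2) true false := by
    refine branch_pair (hqfn _ _ _) (prob_pair_le_one (hprob _ _ _ _) ?_)
    decide
  have e0t := hqf (K 0) true
  have e0f := hqf (K 0) false
  have e1t := hqf (K 1) true
  have e1f := hqf (K 1) false
  have e2t := hqf (K 2) true
  have e2f := hqf (K 2) false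
  linarith [hA1, hB1, hC1t, hC1f, hA2t, hA2f, hB2, hC2, hA3, hB3t, hB3f, hC3, hq1]
end
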